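/- For the recursively defined polynomials f_T(X) = X and f_{t-1}(X) = f_t(X) - n_t·f_t'(X)·X(1-X), each f_t is a polynomial of degree T+1-t with leading coefficient (T-t)!·∏_{s=t+1}^T n_s. -/

import Mathlib

open Polynomial

lemma deriv_stats (g : ℝ[X]) (hD : 1 ≤ g.natDegree) :
    (derivative g).natDegree = g.natDegree - 1 ∧
    (derivative g).leadingCoeff = (g.natDegree : ℝ) * g.leadingCoeff := by
  have hc : (derivative g).coeff (g.natDegree - 1) = (g.natDegree : ℝ) * g.leadingCoeff := by
    rw [coeff_derivative]
    have : g.natDegree - 1 + 1 = g.natDegree := Nat.succ_pred_eq_of_pos hD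
    rw [this]
    rw [leadingCoeff, Nat.cast_sub hD]
    push_cast
    ring
  have hne : (derivative g).coeff (g.natDegree - 1) ≠ 0 := by
    rw [hc]
    have : g.leadingCoeff ≠ 0 := by
      intro h
      rw [leadingCoeff_eq_zero] at h
      simp [h] at hD
    positivity
  have hle := natDegree_derivative_le g
  have h1 : g.natDegree - 1 ≤ (derivative g).natDegree := le_natDegree_of_ne_zero hne
  have hdeg : (derivative g).natDegree = g.natDegree - 1 := le_antisymm hle h1
  refine ⟨hdeg, ?_⟩
  rw [leadingCoeff, hdeg, hc]

lemma step_stats (g : ℝ[X]) (c : ℝ) (hc : 0 < c) (hD : 1 ≤ g.natDegree) :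
    (g - C c * derivative g * (X * (1 - X))).natDegree = g.natDegree + 1 ∧
    (g - C c * derivative g * (X * (1 - X))).leadingCoeff
      = c * g.natDegree * g.leadingCoeff := by
  obtain ⟨hd1, hl1⟩ := deriv_stats g hD
  have hlcg : g.leadingCoeff ≠ 0 := by
    intro h; rw [leadingCoeff_eq_zero] at h; simp [h] at hD
  have hq : (X * (1 - X) : ℝ[X]) = X - X ^ 2 := by ring
  have hqd : (X * (1 - X) : ℝ[X]).natDegree = 2 := by
    rw [hq]; compute_degree!
  have hqlc : (X * (1 - X) : ℝ[X]).leadingCoeff = -1 := by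
    rw [leadingCoeff, hqd, hq]; simp [coeff_X]
  have hq0 : (X * (1 - X) : ℝ[X]) ≠ 0 := fun h => by simp [h] at hqd
  have hg'0 : derivative g ≠ 0 := by
    intro h
    rw [h, leadingCoeff_zero] at hl1
    have hne : (g.natDegree : ℝ) ≠ 0 := by positivity
    rcases mul_eq_zero.1 hl1.symm with h | h
    · exact hne h
    · exact hlcg h
  have hC0 : (C c : ℝ[X]) ≠ 0 := by simp [hc.ne']
  have hhd : (C c * derivative g * (X * (1 - X))).natDegree = g.natDegree + 1 := by
    rw [natDegree_mul (mul_ne_zero hC0 hg'0) hq0, natDegree_mul hC0 hg'0, hqd,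
      natDegree_C, hd1]
    omega
  have hhlc : (C c * derivative g * (X * (1 - X))).leadingCoeff
      = -(c * g.natDegree * g.leadingCoeff) := by
    rw [leadingCoeff_mul, leadingCoeff_mul, hl1, hqlc, leadingCoeff_C]
    ring
  have hlt : g.natDegree < (C c * derivative g * (X * (1 - X))).natDegree := by omega
  constructor
  · rw [natDegree_sub_eq_right_of_natDegree_lt hlt, hhd]
  · rw [leadingCoeff_sub_of_degree_lt' (degree_lt_degree hlt), hhlc, neg_neg]



open Polynomial in
/-- For the recursively defined polynomials `f_T = X`,
`f_{t-1} = f_t - n_t · f_t' · X(1-X)`, each `f_t` has degree `T+1-t` and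
leading coefficient `(T-t)! · ∏_{s=t+1}^T n_s`. -/
theorem stmt_3 (T : ℕ) (n : ℕ → ℕ) (hn : ∀ t, 1 ≤ t → t ≤ T → 0 < n t)
    (f : ℕ → Polynomial ℝ) (hT : f T = X)
    (hrec : ∀ t, 1 ≤ t → t ≤ T →
      f (t-1) = f t - C (n t : ℝ) * derivative (f t) * (X * (1 - X)))
    (t : ℕ) (ht : t ≤ T) :
    (f t).natDegree = T + 1 - t ∧
    (f t).leadingCoeff = (Nat.factorial (T - t) : ℝ) * ∏ s ∈ Finset.Icc (t+1) T, (n s : ℝ) := by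
  suffices H : ∀ d, d ≤ T → (f (T - d)).natDegree = d + 1 ∧
      (f (T - d)).leadingCoeff
        = (Nat.factorial d : ℝ) * ∏ s ∈ Finset.Icc (T - d + 1) T, (n s : ℝ) by
    have h1 := H (T - t) (by omega)
    have h2 : T - (T - t) = t := by omega
    rw [h2] at h1
    have h3 : T + 1 - t = T - t + 1 := by omega
    rw [h3]
    exact h1
  intro d
  induction d with
  | zero =>
    intro _
    simp [hT]
  | succ d ih =>
    intro hd
    obtain ⟨ihd, ihl⟩ := ih (by omega)
    set t0 := T - d with ht0
    have h1 : 1 ≤ t0 := by omega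
    have h2 : t0 ≤ T := by omega
    have hstep := step_stats (f t0) (n t0 : ℝ) (by exact_mod_cast hn t0 h1 h2)
      (by omega)
    rw [← hrec t0 h1 h2] at hstep
    have he : T - (d + 1) = t0 - 1 := by omega
    rw [he]
    refine ⟨?_, ?_⟩
    · rw [hstep.1, ihd]
    rw [hstep.2, ihd, ihl]
    have h4 : t0 - 1 + 1 = t0 := by omega
    rw [h4, Finset.Icc_eq_cons_Ioc h2, Finset.prod_cons, ← Finset.Icc_add_one_left_eq_Ioc]
    push_cast [Nat.factorial_succ]
    ring
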